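/- Let r ≥ 2 be a natural number, let α_1, …, α_r be positive real numbers, let H_1, …, H_r : ℝ → ℝ be differentiable functions, and let φ_2, …, φ_{r-1} : ℝ → ℝ be functions with φ_i(t) ≥ 0 for all t ≥ 0. Suppose: (i) for every t ≥ 0, H_1'(t) = H_2(t) - 2α_1·H_1(t); (ii) for every i with 2 ≤ i ≤ r-1 and every t ≥ 0, H_i'(t) = φ_i(t) + H_{i+1}(t) - (α_1 + α_i)·H_i(t); (iii) for every t ≥ 0, H_r'(t) ≥ -(α_1 + α_r)·H_r(t); and (iv) H_i(0) ≥ 0 for every 1 ≤ i ≤ r. Then H_i(t) ≥ 0 for every 1 ≤ i ≤ r and every t ≥ 0. -/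

import Mathlib

/-- Grönwall-type lemma: if `f' ≥ -K f` on `[0,∞)` and `f 0 ≥ 0`, then `f ≥ 0` on `[0,∞)`. -/
lemma gronwall_nonneg (f : ℝ → ℝ) (K : ℝ) (hf : Differentiable ℝ f)
    (h0 : 0 ≤ f 0) (hd : ∀ t ≥ (0:ℝ), -K * f t ≤ deriv f t) :
    ∀ t ≥ (0:ℝ), 0 ≤ f t := by
  set g : ℝ → ℝ := fun s => Real.exp (K * s) * f s with hg_def
  have hgderiv : ∀ s : ℝ, HasDerivAt g
      (Real.exp (K * s) * K * f s + Real.exp (K * s) * deriv f s) s := by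
    intro s
    exact ((((hasDerivAt_id s).const_mul K).exp).mul ((hf s).hasDerivAt)).congr_deriv (by simp only [id, mul_one])
  have hgdiff : Differentiable ℝ g := fun s => (hgderiv s).differentiableAt
  have hmono : MonotoneOn g (Set.Ici (0:ℝ)) := by
    apply monotoneOn_of_deriv_nonneg (convex_Ici 0) hgdiff.continuous.continuousOn
      (fun s _ => (hgdiff s).differentiableWithinAt)
    intro s hs
    rw [interior_Ici] at hs
    have hs0 : (0:ℝ) ≤ s := le_of_lt hs
    rw [(hgderiv s).deriv]
    have h1 := hd s hs0
    have h2 := Real.exp_pos (K * s)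
    nlinarith [mul_le_mul_of_nonneg_left h1 h2.le]
  intro t ht
  have := hmono (Set.self_mem_Ici) (Set.mem_Ici.mpr ht) ht
  have hg0 : g 0 = f 0 := by simp [hg_def]
  have hgt : 0 ≤ Real.exp (K * t) * f t := by
    have : g 0 ≤ g t := this
    rw [hg0] at this
    exact le_trans h0 this
  nlinarith [Real.exp_pos (K * t)]

/-- differential-inequality cascade in the proof of claim (a) of Theorem 2,
relative degree `r > 1`. With nonnegative forcing terms `φ_i`, the cascade propagates
nonnegativity of all `H_i` forward in time. -/
theorem cascade_nonneg_with_forcing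
    (r : ℕ) (hr : 2 ≤ r) (α : ℕ → ℝ) (hα : ∀ i, 1 ≤ i → i ≤ r → 0 < α i)
    (H : ℕ → ℝ → ℝ) (hdiff : ∀ i, 1 ≤ i → i ≤ r → Differentiable ℝ (H i))
    (φ : ℕ → ℝ → ℝ) (hφ : ∀ i, 2 ≤ i → i ≤ r - 1 → ∀ t ≥ (0:ℝ), 0 ≤ φ i t)
    (h1 : ∀ t ≥ (0:ℝ), deriv (H 1) t = H 2 t - 2 * α 1 * H 1 t)
    (hmid : ∀ i, 2 ≤ i → i ≤ r - 1 → ∀ t ≥ (0:ℝ),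
      deriv (H i) t = φ i t + H (i + 1) t - (α 1 + α i) * H i t)
    (hlast : ∀ t ≥ (0:ℝ), deriv (H r) t ≥ -(α 1 + α r) * H r t)
    (h0 : ∀ i, 1 ≤ i → i ≤ r → 0 ≤ H i 0) :
    ∀ i, 1 ≤ i → i ≤ r → ∀ t ≥ (0:ℝ), 0 ≤ H i t := by
  have key : ∀ d i, i + d = r → 1 ≤ i → ∀ t ≥ (0:ℝ), 0 ≤ H i t := by
    intro d
    induction d with
    | zero =>
      intro i hir hi1
      have hieq : i = r := by omega
      rw [hieq]
      exact gronwall_nonneg (H r) (α 1 + α r) (hdiff r (by omega) le_rfl)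
        (h0 r (by omega) le_rfl) (fun t ht => hlast t ht)
    | succ d ih =>
      intro i hir hi1
      have hnext : ∀ t ≥ (0:ℝ), 0 ≤ H (i + 1) t := ih (i + 1) (by omega) (by omega)
      rcases eq_or_lt_of_le hi1 with h | h
      · -- i = 1
        subst h
        apply gronwall_nonneg (H 1) (2 * α 1) (hdiff 1 le_rfl (by omega))
          (h0 1 le_rfl (by omega))
        intro t ht
        rw [h1 t ht]
        have := hnext t ht
        linarith
      · -- 2 ≤ i ≤ r - 1
        have hi2 : 2 ≤ i := h
        have hile : i ≤ r - 1 := by omega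
        apply gronwall_nonneg (H i) (α 1 + α i) (hdiff i (by omega) (by omega))
          (h0 i (by omega) (by omega))
        intro t ht
        rw [hmid i hi2 hile t ht]
        have := hnext t ht
        have := hφ i hi2 hile t ht
        linarith
  intro i hi1 hir
  exact key (r - i) i (by omega) hi1
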